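/- arXiv:1102.0087 — 3 statements merged into one kernel-verified Lean document; each statement's English description precedes it below -/
import Mathlib

section
/- For every odd integer n and every k ∈ 1/2 + ℤ, the commutator of the operators J_n and φ_k on R satisfies J_n ∘ φ_k − φ_k ∘ J_n = φ_{k−n}. -/
open MvPolynomial

/-- The free boson `φ_{k+1/2}` acting on `R = ℚ[z_{1/2}, z_{3/2}, …]`, where the
variable `z_{m+1/2}` is encoded as `X m`.  For `k ≥ 0` it is multiplication by
`z_{k+1/2}`; for `k < 0` it is `(-1)^{-j-1/2} ∂/∂z_{-j}` (with `j = k + 1/2`),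
i.e. `(-1)^{k+1} ∂/∂z_{-k-1/2}`. -/
noncomputable def phiOp (k : ℤ) : MvPolynomial ℕ ℚ →ₗ[ℚ] MvPolynomial ℕ ℚ :=
  if 0 ≤ k then LinearMap.mulLeft ℚ (X k.toNat)
  else ((-1 : ℚ) ^ (k + 1)) •
    (pderiv (R := ℚ) (σ := ℕ) (-k - 1).toNat).toLinearMap

/-- `J_n = (1/2) Σ_{j ∈ 1/2+ℤ} (-1)^{j+1/2} φ_j ∘ φ_{-j-n}` in integer-shifted
indices: the half-integer `j = k + 1/2` corresponds to `k : ℤ`, so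
`(-1)^{j+1/2} = (-1)^{k+1}` and `φ_{-j-n}` has shifted index `-k-n-1`.
On each polynomial only finitely many summands act nonzero. -/
noncomputable def Jop (n : ℤ) (p : MvPolynomial ℕ ℚ) : MvPolynomial ℕ ℚ :=
  (1/2 : ℚ) • ∑ᶠ k : ℤ, ((-1 : ℚ) ^ (k + 1)) • phiOp k (phiOp (-k - n - 1) p)

lemma phiOp_of_nonneg (k : ℤ) (h : 0 ≤ k) (p : MvPolynomial ℕ ℚ) :
    phiOp k p = X k.toNat * p := by
  rw [phiOp, if_pos h, LinearMap.mulLeft_apply]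

lemma phiOp_of_neg (k : ℤ) (h : ¬ 0 ≤ k) (p : MvPolynomial ℕ ℚ) :
    phiOp k p = ((-1 : ℚ) ^ (k + 1)) • pderiv (-k - 1).toNat p := by
  rw [phiOp, if_neg h]; rfl

lemma sign_succ (b : ℤ) : ((-1:ℚ)^(b+1)) = -(-1:ℚ)^b := by
  rw [zpow_add_one₀ (by norm_num : (-1:ℚ) ≠ 0)]; ring

lemma phi_comm_md (a b : ℤ) (ha : 0 ≤ a) (hb : ¬ 0 ≤ b) (p : MvPolynomial ℕ ℚ) :
    phiOp a (phiOp b p) = phiOp b (phiOp a p) +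
      (if a + b = -1 then ((-1:ℚ)^b) else 0) • p := by
  rw [phiOp_of_neg b hb, phiOp_of_neg b hb, phiOp_of_nonneg a ha, phiOp_of_nonneg a ha,
    pderiv_mul]
  by_cases hc : a + b = -1
  · have hAB : a.toNat = (-b - 1).toNat := by omega
    rw [if_pos hc, ← hAB, pderiv_X_self, sign_succ b]
    rw [mul_smul_comm]
    rw [smul_add]
    ring_nf
    module
  · have hAB : a.toNat ≠ (-b - 1).toNat := by omega
    rw [if_neg hc, pderiv_X_of_ne hAB, zero_smul, add_zero,
      mul_smul_comm, zero_mul, zero_add]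

lemma sign_opp (a b : ℤ) (h : a + b = -1) : ((-1:ℚ)^b) = -(-1:ℚ)^a := by
  rcases Int.even_or_odd a with ha | ha
  · have hb : Odd b := by rcases ha with ⟨s, hs⟩; exact ⟨-s - 1, by omega⟩
    rw [ha.neg_one_zpow, hb.neg_one_zpow]
  · have hb : Even b := by rcases ha with ⟨s, hs⟩; exact ⟨-s - 1, by omega⟩
    rw [ha.neg_one_zpow, hb.neg_one_zpow]; norm_num

lemma pderiv_comm' (i j : ℕ) (f : MvPolynomial ℕ ℚ) :
    pderiv i (pderiv j f) = pderiv j (pderiv i f) := by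
  induction f using MvPolynomial.induction_on with
  | C a => simp
  | add p q hp hq => simp [hp, hq]
  | mul_X p s h =>
    simp only [pderiv_mul, map_add, h, pderiv_X]
    have h1 : pderiv i ((Pi.single j 1 : ℕ → MvPolynomial ℕ ℚ) s) = 0 := by
      rcases eq_or_ne j s with rfl | hne <;> simp [Pi.single_apply, *]
    have h2 : pderiv j ((Pi.single i 1 : ℕ → MvPolynomial ℕ ℚ) s) = 0 := by
      rcases eq_or_ne i s with rfl | hne <;> simp [Pi.single_apply, *]
    rw [h1, h2]
    ring

lemma phi_comm (a b : ℤ) (p : MvPolynomial ℕ ℚ) :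
    phiOp a (phiOp b p) = phiOp b (phiOp a p) +
      (if a + b = -1 then ((-1:ℚ)^b) else 0) • p := by
  by_cases ha : 0 ≤ a <;> by_cases hb : 0 ≤ b
  · rw [if_neg (by omega), zero_smul, add_zero,
      phiOp_of_nonneg a ha, phiOp_of_nonneg a ha, phiOp_of_nonneg b hb, phiOp_of_nonneg b hb]
    ring
  · exact phi_comm_md a b ha hb p
  · rw [phi_comm_md b a hb ha p]
    by_cases hc : a + b = -1
    · rw [if_pos (by omega), if_pos hc, sign_opp a b hc]
      module
    · simp [if_neg (by omega : ¬ b + a = -1), if_neg hc]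
  · rw [if_neg (by omega), zero_smul, add_zero, phiOp_of_neg a ha, phiOp_of_neg a ha,
      phiOp_of_neg b hb, phiOp_of_neg b hb, Derivation.map_smul, Derivation.map_smul,
      pderiv_comm' (-a-1).toNat (-b-1).toNat p]
    rw [smul_comm]

lemma exists_bound (q : MvPolynomial ℕ ℚ) :
    ∃ D : ℕ, ∀ i : ℕ, D ≤ i → pderiv i q = 0 := by
  refine ⟨q.vars.sup id + 1, fun i hi => pderiv_eq_zero_of_notMem_vars fun hmem => ?_⟩
  have := Finset.le_sup (f := id) hmem
  simp only [id] at this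
  omega

lemma term_hi (n m : ℤ) (D : ℕ) (q : MvPolynomial ℕ ℚ)
    (hq : ∀ i : ℕ, D ≤ i → pderiv i q = 0) (h : (D:ℤ) ≤ m + n) :
    phiOp (-m - n - 1) q = 0 := by
  rw [phiOp_of_neg _ (by omega), hq (-(-m - n - 1) - 1).toNat (by omega), smul_zero]

lemma term_lo (n m : ℤ) (hn : n ≠ 0) (D : ℕ) (q : MvPolynomial ℕ ℚ)
    (hq : ∀ i : ℕ, D ≤ i → pderiv i q = 0) (h : m + (D:ℤ) + 1 ≤ 0) :
    phiOp m (phiOp (-m - n - 1) q) = 0 := by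
  have hm : ¬ 0 ≤ m := by omega
  rw [phiOp_of_neg m hm]
  by_cases hb : 0 ≤ -m - n - 1
  · rw [phiOp_of_nonneg _ hb, pderiv_mul, hq (-m - 1).toNat (by omega),
      pderiv_X_of_ne (by omega), zero_mul, mul_zero, add_zero, smul_zero]
  · rw [phiOp_of_neg _ hb, Derivation.map_smul,
      pderiv_comm' (-m-1).toNat (-(-m - n - 1) - 1).toNat q,
      hq (-m - 1).toNat (by omega), map_zero, smul_zero, smul_zero]

lemma sign_mul_one (a b : ℤ) (h : Even (a + b)) : ((-1:ℚ)^a) * (-1:ℚ)^b = 1 := by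
  rcases Int.even_or_odd a with ha | ha
  · have hb : Even b := by
      rcases h with ⟨t, ht⟩; rcases ha with ⟨s, hs⟩; exact ⟨t - s, by omega⟩
    rw [ha.neg_one_zpow, hb.neg_one_zpow]; norm_num
  · have hb : Odd b := by
      rcases h with ⟨t, ht⟩; rcases ha with ⟨s, hs⟩; exact ⟨t - s - 1, by omega⟩
    rw [ha.neg_one_zpow, hb.neg_one_zpow]; norm_num

lemma term_diff (n k m : ℤ) (hn : Odd n) (p : MvPolynomial ℕ ℚ) :
    ((-1:ℚ)^(m+1)) • phiOp m (phiOp (-m - n - 1) (phiOp k p))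
      - phiOp k (((-1:ℚ)^(m+1)) • phiOp m (phiOp (-m - n - 1) p))
    = ((if m = k - n then (1:ℚ) else 0) + (if m = -k - 1 then (1:ℚ) else 0))
        • phiOp (k - n) p := by
  rw [phi_comm (-m - n - 1) k p, map_add, map_smul, phi_comm m k (phiOp (-m - n - 1) p),
    map_smul]
  have e1 : ((-m - n - 1) + k = -1) ↔ (m = k - n) := by omega
  have e2 : ((m + k = -1)) ↔ (m = -k - 1) := by omega
  by_cases h1 : m = k - n <;> by_cases h2 : m = -k - 1
  · rw [if_pos (e1.mpr h1), if_pos (e2.mpr h2), if_pos h1, if_pos h2]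
    have hb : -m - n - 1 = k - n := by omega
    have hm : m = k - n := h1
    rw [hb, hm]
    have hs : ((-1:ℚ)^(k - n + 1)) • ((-1:ℚ)^k • phiOp (k - n) p)
        = phiOp (k - n) p := by
      rw [smul_smul, sign_mul_one _ _ (by rcases hn with ⟨t, ht⟩; exact ⟨k - t, by omega⟩),
        one_smul]
    rw [smul_add, smul_add, hs]
    module
  · rw [if_pos (e1.mpr h1), if_neg (fun h => h2 (e2.mp h)), if_pos h1, if_neg h2]
    have hm : m = k - n := h1
    rw [hm]
    have hs : ((-1:ℚ)^(k - n + 1)) • ((-1:ℚ)^k • phiOp (k - n) p)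
        = phiOp (k - n) p := by
      rw [smul_smul, sign_mul_one _ _ (by rcases hn with ⟨t, ht⟩; exact ⟨k - t, by omega⟩),
        one_smul]
    rw [smul_add, smul_add, hs]
    module
  · rw [if_neg (fun h => h1 (e1.mp h)), if_pos (e2.mpr h2), if_neg h1, if_pos h2]
    have hb : -m - n - 1 = k - n := by omega
    rw [hb]
    have hs : ((-1:ℚ)^(m + 1)) • ((-1:ℚ)^k • phiOp (k - n) p)
        = phiOp (k - n) p := by
      rw [smul_smul, sign_mul_one _ _ ⟨0, by omega⟩, one_smul]
    rw [smul_add, smul_add, hs]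
    module
  · rw [if_neg (fun h => h1 (e1.mp h)), if_neg (fun h => h2 (e2.mp h)), if_neg h1, if_neg h2]
    module

/-- For every odd integer `n` and every `k ∈ 1/2 + ℤ` (shifted index `k : ℤ`),
`J_n ∘ φ_k - φ_k ∘ J_n = φ_{k-n}`. -/
theorem current_boson_commutator (n : ℤ) (hn : Odd n) (k : ℤ)
    (p : MvPolynomial ℕ ℚ) :
    Jop n (phiOp k p) - phiOp k (Jop n p) = phiOp (k - n) p := by
  obtain ⟨D1, hD1⟩ := exists_bound p
  obtain ⟨D2, hD2⟩ := exists_bound (phiOp k p)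
  set D : ℕ := max D1 D2 with hD
  have hp : ∀ i : ℕ, D ≤ i → pderiv i p = 0 :=
    fun i hi => hD1 i (le_trans (le_max_left _ _) hi)
  have hq : ∀ i : ℕ, D ≤ i → pderiv i (phiOp k p) = 0 :=
    fun i hi => hD2 i (le_trans (le_max_right _ _) hi)
  have hn0 : n ≠ 0 := by rcases hn with ⟨t, ht⟩; omega
  set lo : ℤ := min (-(D:ℤ) - 1) (min (k - n) (-k - 1)) with hlo
  set hi : ℤ := max ((D:ℤ) - n) (max (k - n) (-k - 1)) with hhi
  set S : Finset ℤ := Finset.Icc lo hi with hS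
  have hmem1 : k - n ∈ S := by rw [hS, Finset.mem_Icc]; omega
  have hmem2 : -k - 1 ∈ S := by rw [hS, Finset.mem_Icc]; omega
  have hsupp : ∀ (q : MvPolynomial ℕ ℚ), (∀ i : ℕ, D ≤ i → pderiv i q = 0) →
      Function.support
        (fun m : ℤ => ((-1:ℚ)^(m+1)) • phiOp m (phiOp (-m - n - 1) q)) ⊆ (S : Set ℤ) := by
    intro q hq' m hm
    simp only [Function.mem_support] at hm
    by_contra hms
    apply hm
    have hms' : m < lo ∨ hi < m := by
      rw [Finset.mem_coe, hS, Finset.mem_Icc] at hms; omega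
    rcases hms' with h | h
    · rw [term_lo n m hn0 D q hq' (by omega), smul_zero]
    · rw [term_hi n m D q hq' (by omega), map_zero, smul_zero]
  simp only [Jop]
  rw [finsum_eq_sum_of_support_subset _ (hsupp _ hq),
      finsum_eq_sum_of_support_subset _ (hsupp _ hp), map_smul, map_sum, ← smul_sub,
      ← Finset.sum_sub_distrib,
      Finset.sum_congr rfl (fun m _ => term_diff n k m hn p)]
  have hsum : (∑ m ∈ S, ((if m = k - n then (1:ℚ) else 0) +
      (if m = -k - 1 then (1:ℚ) else 0)) • phiOp (k - n) p) = (2:ℚ) • phiOp (k - n) p := by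
    simp only [add_smul, ite_smul, one_smul, zero_smul, Finset.sum_add_distrib,
      Finset.sum_ite_eq', hmem1, hmem2, if_pos]
    rw [two_smul]
  rw [hsum, smul_smul]
  norm_num
end

section
/- Let a, b ≥ 0 be integers and let μ be the hook partition (a+1, 1, 1, …, 1) with b parts equal to 1. Then, for the polynomials h_n generated by only odd power sums, the Jacobi–Trudi determinant of the hook equals the hook sum: det( (h_{μ_i − i + j})_{1≤i,j≤b+1} ) = Σ_{j=0}^{b} (−1)^j h_{a+1+j} h_{b−j}, as an identity in ℚ[t_1, t_3, t_5, …]. (This identity uses that the generating series of the h_n involves only odd-index variables; it fails for a generic family h_n.) -/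
open MvPolynomial Finset

/-- `h_n ∈ ℚ[t_1, t_3, t_5, …]` defined by
`Σ_{n≥0} h_n z^n = exp(Σ_{k≥1 odd} t_k z^k)` (the variable `X k` represents
`t_k`): expanding the exponential over ordered lists,
`h_n = Σ_{L : list of odd positive integers, Σ L = n} (1/|L|!) ∏_{k∈L} t_k`. -/
noncomputable def hOdd (n : ℕ) : MvPolynomial ℕ ℚ :=
  ∑ᶠ (L : List ℕ) (_ : L.sum = n ∧ ∀ k ∈ L, Odd k),
    ((L.length).factorial : ℚ)⁻¹ • (L.map fun k => (X k : MvPolynomial ℕ ℚ)).prod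

/-- `h_n` extended to integer indices by `h_n := 0` for `n < 0`. -/
noncomputable def hOddInt (n : ℤ) : MvPolynomial ℕ ℚ :=
  if n < 0 then 0 else hOdd n.toNat


def oddF (n : ℕ) : Finset (List ℕ) :=
  ((Finset.univ : Finset (Composition n)).image Composition.blocks).filter
    (fun L => ∀ k ∈ L, Odd k)

lemma mem_oddF {n : ℕ} {L : List ℕ} :
    L ∈ oddF n ↔ (L.sum = n ∧ ∀ k ∈ L, Odd k) := by
  simp only [oddF, mem_filter, mem_image, mem_univ, true_and]
  constructor
  · rintro ⟨⟨c, rfl⟩, h2⟩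
    exact ⟨c.blocks_sum, h2⟩
  · rintro ⟨h1, h2⟩
    refine ⟨⟨⟨L, fun {i} hi => (h2 i hi).pos, h1⟩, rfl⟩, h2⟩

noncomputable def pr (L : List ℕ) : MvPolynomial ℕ ℚ :=
  (L.map fun k => (X k : MvPolynomial ℕ ℚ)).prod

lemma pr_append (L1 L2 : List ℕ) : pr (L1 ++ L2) = pr L1 * pr L2 := by
  simp [pr]

lemma hOdd_eq_sum (n : ℕ) :
    hOdd n = ∑ L ∈ oddF n, ((L.length).factorial : ℚ)⁻¹ • pr L := by
  rw [hOdd, ← finsum_mem_coe_finset]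
  apply finsum_congr
  intro L
  refine finsum_congr_Prop ?_ (fun _ => rfl)
  simp only [Finset.mem_coe, mem_oddF]

lemma hOdd_zero : hOdd 0 = 1 := by
  rw [hOdd_eq_sum]
  have : oddF 0 = {[]} := by
    ext L
    simp only [mem_oddF, Finset.mem_singleton]
    constructor
    · rintro ⟨h1, h2⟩
      cases L with
      | nil => rfl
      | cons k t =>
        exfalso
        have := (h2 k (List.mem_cons_self)).pos
        simp [List.sum_cons] at h1
        omega
    · rintro rfl; simp
  rw [this]
  simp [pr]

lemma neg_one_pow_sum {L : List ℕ} (h : ∀ k ∈ L, Odd k) :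
    (-1 : ℚ) ^ L.sum = (-1) ^ L.length := by
  induction L with
  | nil => rfl
  | cons k t ih =>
    have hk : Odd k := h k (List.mem_cons_self)
    have ht := ih (fun i hi => h i (List.mem_cons_of_mem k hi))
    simp only [List.sum_cons, List.length_cons, pow_add, pow_succ]
    rw [ht, hk.neg_one_pow]
    ring

lemma alt_choose (m : ℕ) :
    ∑ p ∈ range (m + 1), (-1 : ℚ) ^ p * (m.choose p : ℚ) =
      if m = 0 then 1 else 0 := by
  have h := Int.alternating_sum_range_choose (n := m)
  have h2 : ((∑ p ∈ range (m + 1), (-1 : ℤ) ^ p * (m.choose p : ℤ) : ℤ) : ℚ)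
      = ((if m = 0 then (1:ℤ) else 0 : ℤ) : ℚ) := by rw [h]
  push_cast at h2
  simpa using h2

lemma inv_fact_eq (m p : ℕ) (hp : p ≤ m) :
    ((p.factorial : ℚ))⁻¹ * (((m - p).factorial : ℚ))⁻¹
      = (m.choose p : ℚ) * ((m.factorial : ℚ))⁻¹ := by
  have h : ((m.choose p : ℚ)) * (p.factorial : ℚ) * ((m - p).factorial : ℚ)
      = (m.factorial : ℚ) := by
    exact_mod_cast congrArg (Nat.cast : ℕ → ℚ)
      (Nat.choose_mul_factorial_mul_factorial hp)
  have h1 : (p.factorial : ℚ) ≠ 0 := by positivity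
  have h2 : ((m - p).factorial : ℚ) ≠ 0 := by positivity
  have h3 : (m.factorial : ℚ) ≠ 0 := by positivity
  field_simp
  linarith [h]

lemma alt_conv (n : ℕ) (hn : n ≠ 0) :
    ∑ i ∈ range (n + 1), ((-1 : ℚ) ^ i) • (hOdd i * hOdd (n - i)) = 0 := by
  have step1 : ∀ i ∈ range (n + 1),
      ((-1 : ℚ) ^ i) • (hOdd i * hOdd (n - i))
        = ∑ z ∈ oddF i ×ˢ oddF (n - i),
            ((-1 : ℚ) ^ z.1.length *
              (((z.1.length.factorial : ℚ))⁻¹ * ((z.2.length.factorial : ℚ))⁻¹))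
              • pr (z.1 ++ z.2) := by
    intro i hi
    rw [hOdd_eq_sum, hOdd_eq_sum, Finset.sum_mul_sum, Finset.smul_sum, Finset.sum_product]
    refine sum_congr rfl fun L1 h1 => ?_
    rw [Finset.smul_sum]
    refine sum_congr rfl fun L2 h2 => ?_
    obtain ⟨hs1, ho1⟩ := mem_oddF.1 h1
    rw [pr_append, smul_mul_smul_comm, smul_smul, ← hs1, neg_one_pow_sum ho1]
  rw [Finset.sum_congr rfl step1, Finset.sum_sigma']
  rw [Finset.sum_nbij' (i := fun x => (⟨x.2.1 ++ x.2.2, x.2.1.length⟩ : Σ _ : List ℕ, ℕ))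
    (j := fun y => (⟨(y.1.take y.2).sum, (y.1.take y.2, y.1.drop y.2)⟩ :
      Σ _ : ℕ, List ℕ × List ℕ))
    (t := (oddF n).sigma fun L => range (L.length + 1))
    (g := fun y => ((-1 : ℚ) ^ y.2 *
      (((y.2.factorial : ℚ))⁻¹ * ((((y.1.length - y.2).factorial : ℚ))⁻¹))) • pr y.1)]
  · -- final sum is zero
    rw [Finset.sum_sigma]
    refine Finset.sum_eq_zero fun L hL => ?_
    obtain ⟨hs, ho⟩ := mem_oddF.1 hL
    have hm : L.length ≠ 0 := by
      intro h
      rw [List.length_eq_zero_iff] at h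
      subst h; simp at hs; exact hn hs.symm
    dsimp only
    rw [← Finset.sum_smul]
    have key : ∑ p ∈ range (L.length + 1),
        (-1 : ℚ) ^ p * (((p.factorial : ℚ))⁻¹ * (((L.length - p).factorial : ℚ))⁻¹) = 0 := by
      have e1 : ∀ p ∈ range (L.length + 1),
          (-1 : ℚ) ^ p * (((p.factorial : ℚ))⁻¹ * (((L.length - p).factorial : ℚ))⁻¹)
            = ((-1 : ℚ) ^ p * (L.length.choose p : ℚ)) * ((L.length.factorial : ℚ))⁻¹ := by
        intro p hp
        rw [inv_fact_eq L.length p (Nat.lt_succ_iff.1 (mem_range.1 hp))]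
        ring
      rw [Finset.sum_congr rfl e1, ← Finset.sum_mul]
      have h0 := alt_choose L.length
      rw [if_neg hm] at h0
      rw [h0, zero_mul]
    rw [key, zero_smul]
  · -- forward membership
    rintro ⟨i, L1, L2⟩ ha
    simp only [Finset.mem_sigma, Finset.mem_range, Finset.mem_product] at ha ⊢
    obtain ⟨hi, h1, h2⟩ := ha
    obtain ⟨hs1, ho1⟩ := mem_oddF.1 h1
    obtain ⟨hs2, ho2⟩ := mem_oddF.1 h2
    constructor
    · rw [mem_oddF]
      constructor
      · rw [List.sum_append, hs1, hs2]; omega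
      · intro k hk
        rcases List.mem_append.1 hk with h | h
        · exact ho1 k h
        · exact ho2 k h
    · simp [List.length_append]
  · -- backward membership
    rintro ⟨L, p⟩ hb
    simp only [Finset.mem_sigma, Finset.mem_range] at hb ⊢
    obtain ⟨hL, hp⟩ := hb
    obtain ⟨hs, ho⟩ := mem_oddF.1 hL
    have hsplit : (L.take p).sum + (L.drop p).sum = n := by
      rw [← List.sum_append, List.take_append_drop, hs]
    refine ⟨by omega, Finset.mem_product.2 ⟨?_, ?_⟩⟩
    · show List.take p L ∈ oddF (List.take p L).sum
      rw [mem_oddF]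
      exact ⟨rfl, fun k hk => ho k (List.take_subset _ _ hk)⟩
    · show List.drop p L ∈ oddF (n - (List.take p L).sum)
      rw [mem_oddF]
      refine ⟨by omega, fun k hk => ho k (List.drop_subset _ _ hk)⟩
  · -- left inverse
    rintro ⟨i, L1, L2⟩ ha
    simp only [Finset.mem_sigma, Finset.mem_range, Finset.mem_product] at ha
    obtain ⟨hi, h1, h2⟩ := ha
    obtain ⟨hs1, ho1⟩ := mem_oddF.1 h1
    simp only [List.take_left, List.drop_left]
    rw [hs1]
  · -- right inverse
    rintro ⟨L, p⟩ hb
    simp only [Finset.mem_sigma, Finset.mem_range] at hb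
    obtain ⟨hL, hp⟩ := hb
    have hp' : p ≤ L.length := Nat.lt_succ_iff.1 hp
    simp [List.take_append_drop, List.length_take, Nat.min_eq_left hp']
  · -- weights agree
    rintro ⟨i, L1, L2⟩ ha
    simp only [Finset.mem_sigma, Finset.mem_range, Finset.mem_product] at ha
    obtain ⟨hi, h1, h2⟩ := ha
    have hlen : (L1 ++ L2).length - L1.length = L2.length := by
      rw [List.length_append]; omega
    dsimp only
    rw [hlen]

lemma hOddInt_neg {n : ℤ} (h : n < 0) : hOddInt n = 0 := if_pos h

lemma hOddInt_natCast (n : ℕ) : hOddInt (n : ℤ) = hOdd n := by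
  simp [hOddInt]

lemma conv_T (m : ℕ) (n : ℤ) (hnm : n ≤ (m : ℤ)) :
    ∑ k ∈ range (m + 1), ((-1 : ℚ) ^ k) • (hOdd k * hOddInt (n - k)) =
      if n = 0 then 1 else 0 := by
  rcases lt_trichotomy n 0 with h | h | h
  · rw [if_neg (by omega)]
    refine Finset.sum_eq_zero fun k hk => ?_
    rw [hOddInt_neg (by omega), mul_zero, smul_zero]
  · subst h
    rw [if_pos rfl, Finset.sum_eq_single 0]
    · have : ((0:ℤ) - (0:ℕ)) = ((0:ℕ) : ℤ) := by norm_num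
      rw [this, hOddInt_natCast, hOdd_zero]
      simp
    · intro k hk hk0
      have hk1 : (1:ℕ) ≤ k := Nat.one_le_iff_ne_zero.2 hk0
      rw [hOddInt_neg (by omega), mul_zero, smul_zero]
    · intro h0
      exact absurd (Finset.mem_range.2 (Nat.succ_pos m)) h0
  · rw [if_neg (by omega)]
    set N := n.toNat with hN
    have hn' : (N : ℤ) = n := Int.toNat_of_nonneg (by omega)
    have hsub : range (N + 1) ⊆ range (m + 1) := by
      intro x hx
      simp only [mem_range] at hx ⊢
      omega
    have hvan : ∀ k ∈ range (m + 1), k ∉ range (N + 1) →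
        ((-1 : ℚ) ^ k) • (hOdd k * hOddInt (n - k)) = 0 := by
      intro k _ hk
      simp only [mem_range] at hk
      rw [hOddInt_neg (by omega), mul_zero, smul_zero]
    rw [← Finset.sum_subset hsub hvan]
    have hcg : ∀ k ∈ range (N + 1),
        ((-1 : ℚ) ^ k) • (hOdd k * hOddInt (n - k))
          = ((-1 : ℚ) ^ k) • (hOdd k * hOdd (N - k)) := by
      intro k hk
      simp only [mem_range] at hk
      have : (n - k : ℤ) = ((N - k : ℕ) : ℤ) := by omega
      rw [this, hOddInt_natCast]
    rw [Finset.sum_congr rfl hcg]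
    exact alt_conv N (by omega)

lemma neg_one_pow_sub (b j : ℕ) (h : j ≤ b) :
    (-1 : ℚ) ^ (b - j) = (-1) ^ b * (-1) ^ j := by
  have h2 : (-1 : ℚ) ^ j * (-1) ^ j = 1 := by
    rw [← pow_add]
    exact Even.neg_one_pow ⟨j, rfl⟩
  calc (-1 : ℚ) ^ (b - j) = (-1) ^ (b - j) * ((-1) ^ j * (-1) ^ j) := by rw [h2, mul_one]
    _ = (-1) ^ ((b - j) + j) * (-1) ^ j := by rw [← mul_assoc, ← pow_add]
    _ = (-1) ^ b * (-1) ^ j := by congr 2; omega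

lemma conv_U (j' : ℕ) (c : ℤ) (hc : c ≤ 0) :
    ∑ k ∈ range (j' + 1),
        hOddInt (c + k) * (((-1 : ℚ) ^ (j' - k)) • hOdd (j' - k))
      = if c + j' = 0 then 1 else 0 := by
  rw [← Finset.sum_range_reflect]
  have hcg : ∀ k ∈ range (j' + 1),
      hOddInt (c + ((j' + 1 - 1 - k : ℕ) : ℤ)) *
          (((-1 : ℚ) ^ (j' - (j' + 1 - 1 - k))) • hOdd (j' - (j' + 1 - 1 - k)))
        = ((-1 : ℚ) ^ k) • (hOdd k * hOddInt ((c + j') - k)) := by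
    intro k hk
    simp only [mem_range] at hk
    have h1 : j' + 1 - 1 - k = j' - k := by omega
    rw [h1]
    have h2 : j' - (j' - k) = k := by omega
    have h3 : (c + ((j' - k : ℕ) : ℤ)) = (c + j') - k := by omega
    rw [h2, h3, mul_smul_comm, mul_comm]
  rw [Finset.sum_congr rfl hcg]
  exact conv_T j' (c + j') (by omega)

/-- For the hook partition `μ = (a+1, 1, …, 1)` (with `b` parts equal to `1`)
and the polynomials `h_n` generated by only odd power sums, the
Jacobi–Trudi determinant `det((h_{μ_i - i + j})_{1≤i,j≤b+1})` equals the hook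
sum `Σ_{j=0}^{b} (-1)^j h_{a+1+j} h_{b-j}`. -/
theorem jacobi_trudi_hook_odd_variables (a b : ℕ) :
    Matrix.det (Matrix.of fun i j : Fin (b + 1) =>
        hOddInt ((if (i : ℕ) = 0 then (a : ℤ) + 1 else 1) - (i : ℕ) + (j : ℕ)))
      = ∑ j ∈ Finset.range (b + 1),
          ((-1 : ℚ) ^ j) • (hOdd (a + 1 + j) * hOdd (b - j)) := by
  set M : Matrix (Fin (b + 1)) (Fin (b + 1)) (MvPolynomial ℕ ℚ) :=
    Matrix.of (fun i j : Fin (b + 1) =>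
      hOddInt ((if (i : ℕ) = 0 then (a : ℤ) + 1 else 1) - (i : ℕ) + (j : ℕ))) with hM
  set U : Matrix (Fin (b + 1)) (Fin (b + 1)) (MvPolynomial ℕ ℚ) :=
    Matrix.of (fun j j' : Fin (b + 1) =>
      if (j : ℕ) ≤ (j' : ℕ) then
        ((-1 : ℚ) ^ ((j' : ℕ) - (j : ℕ))) • hOdd ((j' : ℕ) - (j : ℕ)) else 0) with hUdef
  have hU : U.det = 1 := by
    rw [Matrix.det_of_upperTriangular (M := U) (by
      intro i j hij
      simp only [hUdef, Matrix.of_apply, id] at hij ⊢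
      rw [if_neg (by exact Nat.not_le.2 hij)])]
    refine Finset.prod_eq_one fun i _ => ?_
    simp [hUdef, hOdd_zero]
  have key : ∀ i j' : Fin (b + 1), (i : ℕ) ≠ 0 →
      (M * U) i j' = if (i : ℕ) = (j' : ℕ) + 1 then 1 else 0 := by
    intro i j' hi
    rw [Matrix.mul_apply]
    have e1 : ∀ j : Fin (b + 1), M i j * U j j'
        = (fun jn : ℕ => hOddInt (1 - (i : ℕ) + jn) *
            (if jn ≤ (j' : ℕ) then
              ((-1 : ℚ) ^ ((j' : ℕ) - jn)) • hOdd ((j' : ℕ) - jn) else 0)) (j : ℕ) := by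
      intro j
      simp only [hM, hUdef, Matrix.of_apply, if_neg hi]
    rw [Finset.sum_congr rfl (fun j _ => e1 j),
      Fin.sum_univ_eq_sum_range (fun jn : ℕ => hOddInt (1 - (i : ℕ) + jn) *
            (if jn ≤ (j' : ℕ) then
              ((-1 : ℚ) ^ ((j' : ℕ) - jn)) • hOdd ((j' : ℕ) - jn) else 0)) (b + 1)]
    have hvan : ∀ k ∈ range (b + 1), k ∉ range ((j' : ℕ) + 1) →
        hOddInt (1 - (i : ℕ) + k) *
          (if k ≤ (j' : ℕ) then
            ((-1 : ℚ) ^ ((j' : ℕ) - k)) • hOdd ((j' : ℕ) - k) else 0) = 0 := by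
      intro k _ hk
      simp only [mem_range] at hk
      rw [if_neg (by omega), mul_zero]
    rw [← Finset.sum_subset (Finset.range_subset_range.2 (by omega : (j' : ℕ) + 1 ≤ b + 1)) hvan]
    have hcg : ∀ k ∈ range ((j' : ℕ) + 1),
        hOddInt (1 - (i : ℕ) + k) *
          (if k ≤ (j' : ℕ) then
            ((-1 : ℚ) ^ ((j' : ℕ) - k)) • hOdd ((j' : ℕ) - k) else 0)
        = hOddInt ((1 - (i : ℕ)) + k) *
            (((-1 : ℚ) ^ ((j' : ℕ) - k)) • hOdd ((j' : ℕ) - k)) := by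
      intro k hk
      simp only [mem_range] at hk
      rw [if_pos (by omega)]
    rw [Finset.sum_congr rfl hcg, conv_U (j' : ℕ) (1 - (i : ℕ)) (by omega)]
    exact if_congr (by omega) rfl rfl
  have hMU : M.det = (M * U).det := by rw [Matrix.det_mul, hU, mul_one]
  rw [hMU, Matrix.det_succ_column (M * U) (Fin.last b)]
  rw [Finset.sum_eq_single (0 : Fin (b + 1))
    (by
      intro i _ hi0
      rw [key i (Fin.last b) (by
        intro h
        exact hi0 (Fin.ext (by simp [h])))]
      rw [if_neg (by
        have := i.isLt
        simp only [Fin.val_last]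
        omega), mul_zero, zero_mul])
    (by intro h; exact absurd (Finset.mem_univ _) h)]
  have hminor : ((M * U).submatrix (Fin.succAbove 0) (Fin.succAbove (Fin.last b))) = 1 := by
    ext i' j'
    rw [Matrix.submatrix_apply, Fin.zero_succAbove, Fin.succAbove_last,
      key i'.succ j'.castSucc (by simp [Fin.val_succ])]
    simp only [Fin.val_succ, Fin.coe_castSucc, Matrix.one_apply, Nat.add_right_cancel_iff]
    by_cases h : i' = j'
    · rw [if_pos (by rw [h]), if_pos h]
    · rw [if_neg (fun hh => h (Fin.ext hh)), if_neg h]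
  rw [hminor, Matrix.det_one, mul_one]
  have hentry : (M * U) 0 (Fin.last b) = ∑ j ∈ range (b + 1),
      hOdd (a + 1 + j) * (((-1 : ℚ) ^ (b - j)) • hOdd (b - j)) := by
    rw [Matrix.mul_apply]
    have e1 : ∀ j : Fin (b + 1), M 0 j * U j (Fin.last b)
        = (fun jn : ℕ => hOddInt ((a : ℤ) + 1 + jn) *
            (((-1 : ℚ) ^ (b - jn)) • hOdd (b - jn))) (j : ℕ) := by
      intro j
      have hjb : (j : ℕ) ≤ b := by omega
      simp only [hM, hUdef, Matrix.of_apply, Fin.val_zero, Fin.val_last, Nat.cast_zero,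
        sub_zero, eq_self_iff_true, if_true, if_pos hjb]
    rw [Finset.sum_congr rfl (fun j _ => e1 j),
      Fin.sum_univ_eq_sum_range (fun jn : ℕ => hOddInt ((a : ℤ) + 1 + jn) *
            (((-1 : ℚ) ^ (b - jn)) • hOdd (b - jn))) (b + 1)]
    refine Finset.sum_congr rfl fun j hj => ?_
    have : ((a : ℤ) + 1 + j) = ((a + 1 + j : ℕ) : ℤ) := by push_cast; ring
    rw [this, hOddInt_natCast]
  rw [hentry]
  have hsign : ((-1 : MvPolynomial ℕ ℚ)) ^ (((0 : Fin (b+1)) : ℕ) + ((Fin.last b : Fin (b+1)) : ℕ))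
      = C ((-1 : ℚ) ^ b) := by
    simp only [Fin.val_last, Fin.val_zero, zero_add]
    rw [map_pow, map_neg, map_one]
  rw [hsign, ← smul_eq_C_mul, Finset.smul_sum]
  refine Finset.sum_congr rfl fun j hj => ?_
  simp only [mem_range] at hj
  rw [mul_smul_comm, smul_smul]
  congr 1
  rw [neg_one_pow_sub b j (by omega), ← mul_assoc, ← pow_add,
    Even.neg_one_pow ⟨b, rfl⟩, one_mul]
end

section
/- Let a be an indeterminate. The element exp((a/2) z_{1/2}²) := Σ_{n≥0} (a/2)^n z_{1/2}^{2n}/n! lies in the degree completion of R (tensored with ℚ[[a]]); applying Γ(t) componentwise and taking the constant term gives ⟨0| Γ(t) exp((a/2) φ_{1/2}²) |0⟩ = (1 − a t_1)^{−1/2}, i.e. the constant term of Γ(t)(exp((a/2) z_{1/2}²)) equals Σ_{n≥0} binom(2n, n) (a t_1)^n / 4^n as a formal power series in a and t. In particular it depends only on t_1. -/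
open MvPolynomial

/-- Apply a finite composition `J_{n_1} ∘ J_{n_2} ∘ ⋯ ∘ J_{n_r}` (given by a
list `[n_1, …, n_r]`) to a polynomial. -/
noncomputable def applyJ (l : List ℤ) (p : MvPolynomial ℕ ℚ) : MvPolynomial ℕ ℚ :=
  l.foldr (fun n q => Jop n q) p

/-- The list of entries of a finitely supported multiplicity function
`a : ℕ →₀ ℕ`, each `n` repeated `a n` times (in increasing order). -/
noncomputable def expList (a : ℕ →₀ ℕ) : List ℕ :=
  (Finsupp.toMultiset a).sort (· ≤ ·)

/-- The constant term of `Γ(t)(q)`, `Γ(t) = exp(Σ_{n≥1 odd} t_n J_n)`, as a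
polynomial in the times `t = (t_1, t_3, t_5, …)` (the variable `X n`
represents `t_n`).  Expanding the exponential (the `J_n`, `n > 0` odd,
commute), the coefficient of `t^a` is `(∏_n (a n)!)⁻¹ ⟨0| ∏_n J_n^{a n} q⟩`. -/
noncomputable def constTermGamma (q : MvPolynomial ℕ ℚ) : MvPolynomial ℕ ℚ :=
  ∑ᶠ (a : ℕ →₀ ℕ) (_ : ∀ n ∈ a.support, Odd n),
    MvPolynomial.monomial a
      (MvPolynomial.coeff 0 (applyJ ((expList a).map fun n => (n : ℤ)) q)
        / ∏ n ∈ a.support, ((a n).factorial : ℚ))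

/-! ### Auxiliary lemmas -/

private lemma phiOp_nonneg {k : ℤ} (hk : 0 ≤ k) (p : MvPolynomial ℕ ℚ) :
    phiOp k p = X k.toNat * p := by
  rw [phiOp, if_pos hk]; rfl

private lemma phiOp_neg {k : ℤ} (hk : k < 0) (p : MvPolynomial ℕ ℚ) :
    phiOp k p = ((-1 : ℚ) ^ (k + 1)) • pderiv (-k - 1).toNat p := by
  rw [phiOp, if_neg (not_le.2 hk)]; rfl

private lemma pderiv0_X0_pow (m : ℕ) :
    pderiv (R := ℚ) (σ := ℕ) 0 ((X 0 : MvPolynomial ℕ ℚ) ^ m)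
      = (m : ℚ) • (X 0 : MvPolynomial ℕ ℚ) ^ (m - 1) := by
  rw [pderiv_pow, pderiv_X_self, mul_one, smul_eq_C_mul]
  norm_cast

private lemma pderiv_ne_X0_pow {i : ℕ} (h : i ≠ 0) (m : ℕ) :
    pderiv (R := ℚ) (σ := ℕ) i ((X 0 : MvPolynomial ℕ ℚ) ^ m) = 0 := by
  rw [pderiv_pow, pderiv_X_of_ne (Ne.symm h), mul_zero]

/-- All summands of `J_n` vanish on `X 0 ^ m` except `(n,k) = (1,-1)`. -/
private lemma term_eq_zero {n k : ℤ} (hn : 1 ≤ n) (m : ℕ) (h : ¬(n = 1 ∧ k = -1)) :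
    ((-1 : ℚ) ^ (k + 1)) • phiOp k (phiOp (-k - n - 1) ((X 0 : MvPolynomial ℕ ℚ) ^ m)) = 0 := by
  rcases le_or_gt 0 (-k - n - 1) with h1 | h1
  · -- inner operator is multiplication by a variable, outer is a derivative that misses it
    have hk : k < 0 := by omega
    rw [phiOp_nonneg h1, phiOp_neg hk]
    have hne : (-k - n - 1).toNat ≠ (-k - 1).toNat := by omega
    have h0 : (0 : ℕ) ≠ (-k - 1).toNat := by omega
    rw [pderiv_mul, pderiv_X_of_ne hne, pderiv_ne_X0_pow (Ne.symm h0), zero_mul, mul_zero,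
      add_zero, smul_zero, smul_zero]
  · -- inner operator is a derivative
    rw [phiOp_neg h1]
    have he : (-(-k - n - 1) - 1) = k + n := by ring
    rw [he]
    by_cases hk0 : k + n = 0
    · -- `k = -n`, inner derivative is `∂_0`, outer derivative index `n-1 ≥ 1` kills the result
      have hn2 : 2 ≤ n := by
        rcases eq_or_lt_of_le hn with h' | h'
        · exact absurd ⟨h'.symm, by omega⟩ h
        · omega
      have hk : k < 0 := by omega
      rw [hk0, Int.toNat_zero, pderiv0_X0_pow, phiOp_neg hk]
      have h0 : (0 : ℕ) ≠ (-k - 1).toNat := by omega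
      rw [Derivation.map_smul, Derivation.map_smul, pderiv_ne_X0_pow (Ne.symm h0), smul_zero,
        smul_zero, smul_zero, smul_zero]
    · -- inner derivative index `k + n ≠ 0` kills `X 0 ^ m`
      have h0 : (k + n).toNat ≠ 0 := by omega
      rw [pderiv_ne_X0_pow h0, smul_zero, map_zero, smul_zero]

private lemma Jop_one_smul (c : ℚ) (m : ℕ) :
    Jop 1 (c • (X 0 : MvPolynomial ℕ ℚ) ^ m)
      = (c * (m : ℚ) * ((m - 1 : ℕ) : ℚ) / 2) • (X 0 : MvPolynomial ℕ ℚ) ^ (m - 2) := by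
  rw [Jop]
  have hs : ∀ k : ℤ, k ≠ -1 →
      ((-1 : ℚ) ^ (k + 1)) • phiOp k (phiOp (-k - 1 - 1) (c • (X 0 : MvPolynomial ℕ ℚ) ^ m))
        = 0 := by
    intro k hk
    rw [map_smul, map_smul, smul_comm]
    rw [term_eq_zero le_rfl m (by simp [hk]), smul_zero]
  rw [finsum_eq_single _ (-1 : ℤ) hs]
  have hv : ((-1 : ℤ) + 1) = 0 := by ring
  have hi : (-(-1 : ℤ) - 1 - 1) = -1 := by ring
  rw [hi, hv, zpow_zero, one_smul]
  have hneg : (-1 : ℤ) < 0 := by norm_num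
  rw [phiOp_neg hneg, phiOp_neg hneg]
  have ht : (-(-1 : ℤ) - 1).toNat = 0 := by norm_num
  rw [ht, hv, zpow_zero, one_smul, one_smul, Derivation.map_smul, pderiv0_X0_pow,
    Derivation.map_smul, Derivation.map_smul, pderiv0_X0_pow]
  rw [smul_smul, smul_smul, smul_smul]
  have h12 : m - 1 - 1 = m - 2 := by omega
  rw [h12]
  congr 1
  ring

private lemma Jop_ge_two_smul {n : ℤ} (hn : 2 ≤ n) (c : ℚ) (m : ℕ) :
    Jop n (c • (X 0 : MvPolynomial ℕ ℚ) ^ m) = 0 := by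
  rw [Jop]
  have hs : ∀ k : ℤ,
      ((-1 : ℚ) ^ (k + 1)) • phiOp k (phiOp (-k - n - 1) (c • (X 0 : MvPolynomial ℕ ℚ) ^ m))
        = 0 := by
    intro k
    rw [map_smul, map_smul, smul_comm]
    rw [term_eq_zero (by omega) m (by omega), smul_zero]
  rw [finsum_eq_zero_of_forall_eq_zero hs, smul_zero]

/-- Main computation: `applyJ` on a list of positive integers applied to `X 0 ^ m`. -/
private lemma applyJ_pow (l : List ℤ) (hl : ∀ x ∈ l, 1 ≤ x) (m : ℕ) :
    applyJ l ((X 0 : MvPolynomial ℕ ℚ) ^ m)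
      = (if ∀ x ∈ l, x = 1 then
            (1 / 2 : ℚ) ^ l.length * (m.descFactorial (2 * l.length) : ℚ)
          else 0) • (X 0 : MvPolynomial ℕ ℚ) ^ (m - 2 * l.length) := by
  induction l with
  | nil => simp [applyJ]
  | cons a l ih =>
      have hl' : ∀ x ∈ l, 1 ≤ x := fun x hx => hl x (List.mem_cons_of_mem a hx)
      have hstep : applyJ (a :: l) ((X 0 : MvPolynomial ℕ ℚ) ^ m)
          = Jop a (applyJ l ((X 0 : MvPolynomial ℕ ℚ) ^ m)) := rfl
      rw [hstep, ih hl']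
      rcases eq_or_lt_of_le (hl a (List.mem_cons_self)) with rfl | ha
      · -- a = 1
        rw [Jop_one_smul]
        have hcond : (∀ x ∈ (1:ℤ) :: l, x = 1) ↔ (∀ x ∈ l, x = 1) := by
          constructor
          · intro h x hx; exact h x (List.mem_cons_of_mem 1 hx)
          · intro h x hx
            rcases List.mem_cons.1 hx with rfl | hx
            · rfl
            · exact h x hx
        have hexp : m - 2 * l.length - 2 = m - 2 * (1 :: l).length := by
          simp only [List.length_cons]; omega
        rw [hexp]
        congr 1
        by_cases hall : ∀ x ∈ l, x = 1
        · rw [if_pos hall, if_pos (hcond.2 hall)]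
          have hd : m.descFactorial (2 * ((1:ℤ) :: l).length)
              = (m - 2 * l.length - 1) * ((m - 2 * l.length) * m.descFactorial (2 * l.length)) := by
            have h2 : 2 * ((1:ℤ) :: l).length = (2 * l.length + 1) + 1 := by
              simp only [List.length_cons]; omega
            rw [h2, Nat.descFactorial_succ, Nat.descFactorial_succ]
            have : m - (2 * l.length + 1) = m - 2 * l.length - 1 := by omega
            rw [this]
          rw [hd]
          simp only [List.length_cons, pow_succ]
          push_cast
          ring
        · rw [if_neg hall, if_neg (fun h => hall (hcond.1 h))]
          ring
      · -- 2 ≤ a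
        rw [Jop_ge_two_smul (by omega : (2:ℤ) ≤ a)]
        have : ¬ (∀ x ∈ a :: l, x = 1) := fun h => by
          have := h a (List.mem_cons_self); omega
        rw [if_neg this, zero_smul]

private lemma coeff0_X0_pow (e : ℕ) :
    coeff 0 ((X 0 : MvPolynomial ℕ ℚ) ^ e) = if e = 0 then 1 else 0 := by
  rw [← constantCoeff_eq]
  simp [zero_pow_eq]

private lemma coeff0_applyJ (l : List ℤ) (hl : ∀ x ∈ l, 1 ≤ x) (n : ℕ) :
    coeff 0 (applyJ l ((X 0 : MvPolynomial ℕ ℚ) ^ (2 * n)))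
      = if l = List.replicate n 1 then (((2 * n).factorial : ℚ) / 2 ^ n) else 0 := by
  rw [applyJ_pow l hl, coeff_smul, coeff0_X0_pow, smul_eq_mul]
  by_cases hrep : l = List.replicate n 1
  · subst hrep
    rw [if_pos rfl]
    have hall : ∀ x ∈ List.replicate n (1 : ℤ), x = 1 := fun x hx =>
      List.eq_of_mem_replicate hx
    rw [if_pos hall, List.length_replicate]
    have : 2 * n - 2 * n = 0 := by omega
    rw [this, if_pos rfl, mul_one, Nat.descFactorial_self]
    rw [div_pow, one_pow]
    ring
  · rw [if_neg hrep]
    by_cases hall : ∀ x ∈ l, x = 1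
    · -- all ones but wrong length
      have hlrep : l = List.replicate l.length 1 := by
        apply List.eq_replicate_of_mem hall
      have hlen : l.length ≠ n := fun h => hrep (by rw [hlrep, h])
      rcases lt_or_gt_of_ne hlen with hlt | hgt
      · have : ¬ (2 * n - 2 * l.length = 0) := by omega
        rw [if_neg this, mul_zero]
      · have : (2 * n).descFactorial (2 * l.length) = 0 :=
          Nat.descFactorial_eq_zero_iff_lt.2 (by omega)
        rw [if_pos hall, this]
        push_cast
        ring
    · rw [if_neg hall, zero_mul]

private lemma expList_single (n : ℕ) :
    expList (Finsupp.single 1 n) = List.replicate n 1 := by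
  rw [expList]
  rw [List.eq_replicate_iff]
  constructor
  · rw [Multiset.length_sort, Finsupp.toMultiset_single, Multiset.nsmul_singleton,
      Multiset.card_replicate]
  · intro x hx
    rw [Multiset.mem_sort, Finsupp.toMultiset_single, Multiset.nsmul_singleton,
      Multiset.mem_replicate] at hx
    exact hx.2

private lemma toMultiset_eq_replicate {a : ℕ →₀ ℕ} {n : ℕ}
    (h : Finsupp.toMultiset a = Multiset.replicate n 1) : a = Finsupp.single 1 n := by
  have h2 := congrArg Multiset.toFinsupp h
  rw [Finsupp.toMultiset_toFinsupp] at h2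
  rw [h2, Multiset.toFinsupp_eq_iff, Finsupp.toMultiset_single, Multiset.nsmul_singleton]

private lemma castList_eq (l : List ℕ) :
    (l.map fun n => (n : ℤ)) = List.map (fun n : ℕ => (n : ℤ)) l := by
  induction l with
  | nil => rfl
  | cons a l ih => simp_all

/-- Coefficient-of-`a^n` form of:
`⟨0| Γ(t) exp((a/2) φ_{1/2}²) |0⟩ = (1 - a t_1)^{-1/2}
  = Σ_{n≥0} binom(2n,n) (a t_1)^n / 4^n`
as a formal power series in `a` and `t`.  Here
`exp((a/2) z_{1/2}²) = Σ_n a^n z_{1/2}^{2n}/(2^n n!)` lies in the degree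
completion of `R`, `Γ(t)` is applied componentwise, and the coefficient of
`a^n` of the constant term, namely `(2^n n!)⁻¹ ⟨0|Γ(t) z_{1/2}^{2n}|0⟩`,
equals `binom(2n,n) t_1^n / 4^n`.  In particular it depends only on `t_1`. -/
theorem tau_gaussian_coefficients (n : ℕ) :
    ((2 : ℚ) ^ n * (n.factorial : ℚ))⁻¹ •
        constTermGamma ((X 0 : MvPolynomial ℕ ℚ) ^ (2 * n))
      = (((2 * n).choose n : ℚ) / 4 ^ n) • (X 1 : MvPolynomial ℕ ℚ) ^ n := by
  classical
  have hprod : (∏ i ∈ (Finsupp.single 1 n).support, (((Finsupp.single 1 n) i).factorial : ℚ))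
      = (n.factorial : ℚ) := by
    by_cases hn : n = 0
    · subst hn; simp
    · rw [Finsupp.support_single_ne_zero 1 hn, Finset.prod_singleton, Finsupp.single_eq_same]
  have hzero : ∀ a : ℕ →₀ ℕ, a ≠ Finsupp.single 1 n →
      (∑ᶠ (_ : ∀ m ∈ a.support, Odd m),
        (monomial a) (coeff 0
            (applyJ ((expList a).map fun i => (i : ℤ)) ((X 0 : MvPolynomial ℕ ℚ) ^ (2 * n)))
          / ∏ i ∈ a.support, ((a i).factorial : ℚ))) = 0 := by
    intro a ha
    rw [castList_eq, finsum_eq_if]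
    split_ifs with hodd
    · have hl : ∀ x ∈ List.map (fun n : ℕ => (n : ℤ)) (expList a), 1 ≤ x := by
        intro x hx
        rcases List.mem_map.1 hx with ⟨i, hi, rfl⟩
        have hi' : i ∈ a.support := by
          rw [expList, Multiset.mem_sort, Finsupp.mem_toMultiset] at hi
          exact hi
        rcases hodd i hi' with ⟨t, ht⟩
        omega
      rw [coeff0_applyJ _ hl]
      have hne : List.map (fun n : ℕ => (n : ℤ)) (expList a) ≠ List.replicate n 1 := by
        intro hmap
        apply ha
        have hexp : expList a = List.replicate n 1 := by
          rw [List.eq_replicate_iff]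
          constructor
          · have := congrArg List.length hmap
            simpa using this
          · intro b hb
            have hb' : ((b : ℕ) : ℤ) ∈ List.replicate n (1 : ℤ) := by
              rw [← hmap]; exact List.mem_map_of_mem hb
            have := List.eq_of_mem_replicate hb'
            exact_mod_cast this
        apply toMultiset_eq_replicate
        have h5 := congrArg (fun l : List ℕ => (l : Multiset ℕ)) hexp
        rw [expList] at h5
        simpa [Multiset.sort_eq, Multiset.coe_replicate] using h5
      rw [if_neg hne, zero_div, map_zero]
    · rfl
  have hval : constTermGamma ((X 0 : MvPolynomial ℕ ℚ) ^ (2 * n))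
      = (((2 * n).factorial : ℚ) / 2 ^ n / (n.factorial : ℚ)) • (X 1 : MvPolynomial ℕ ℚ) ^ n := by
    rw [constTermGamma, finsum_eq_single _ (Finsupp.single 1 n) hzero, finsum_eq_if]
    have hodd : ∀ m ∈ (Finsupp.single 1 n).support, Odd m := by
      intro m hm
      have := Finsupp.support_single_subset hm
      rw [Finset.mem_singleton] at this
      subst this
      exact odd_one
    rw [if_pos hodd, castList_eq, expList_single, List.map_replicate]
    have hl : ∀ x ∈ List.replicate n ((1 : ℕ) : ℤ), 1 ≤ x := fun x hx => by
      rw [List.eq_of_mem_replicate hx]; norm_num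
    rw [coeff0_applyJ _ hl, if_pos (by norm_num), hprod]
    rw [X_pow_eq_monomial, smul_monomial, smul_eq_mul, mul_one, div_div]
  rw [hval, smul_smul]
  have hkey : (((2 * n).choose n : ℚ) * (n.factorial : ℚ) * (n.factorial : ℚ))
      = ((2 * n).factorial : ℚ) := by
    have h := Nat.choose_mul_factorial_mul_factorial (show n ≤ 2 * n by omega)
    have h2 : 2 * n - n = n := by omega
    rw [h2] at h
    exact_mod_cast h
  congr 1
  have h2 : (2 : ℚ) ^ n ≠ 0 := by positivity
  have hf : (n.factorial : ℚ) ≠ 0 := by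
    exact_mod_cast n.factorial_ne_zero
  have h4 : (4 : ℚ) ^ n = 2 ^ n * 2 ^ n := by
    rw [← mul_pow]; norm_num
  rw [← hkey, h4]
  field_simp
end
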